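/- Fix an integer n ≥ 2 and nonnegative integers k_1,…,k_{n−1} with |k| := k_1+⋯+k_{n−1}. For integers g large enough that 2g+2n−2−|k| ≥ 0, define Λ(g) := l_{k_1,…,k_{n−1}, 2g+2n−2−|k|} / (2g+2n−3)!!. Then as g → ∞, Λ(g) converges, with limit 1 if (k_1,…,k_{n−1}) = (0,0,…,0); limit −1 if (k_1,…,k_{n−1}) = (1,0,…,0); and limit 0 for every other choice of (k_1,…,k_{n−1}). -/
import Mathlib


/-- Double factorial on naturals: `0!! = 1`, `1!! = 1`, `(k+2)!! = (k+2)·k!!`. -/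
def df : ℕ → ℕ
  | 0 => 1
  | 1 => 1
  | k + 2 => (k + 2) * df k

/-- Double factorial of an integer, with `z!! = 1` for `z ≤ 0` (so `(-1)!! = 0!! = 1`). -/
def dfacZ (z : ℤ) : ℤ := if z ≤ 0 then 1 else (df z.toNat : ℤ)

/-- The matrices `L_k`. -/
noncomputable def Lmat (k : ℕ) : Matrix (Fin 2) (Fin 2) ℝ :=
  if k = 0 then !![1, 0; 0, 0]
  else if k % 2 = 0 then !![(df (k - 1) : ℝ), 0; 0, -(df (k - 1) : ℝ)]
  else !![0, -(df k : ℝ); (df (k - 2) : ℝ), 0]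

/-- `l_{k_1,…,k_m} = tr(L_{k_1}⋯L_{k_m})` if all indices are nonnegative, else `0`. -/
noncomputable def lSeq (m : ℕ) (k : Fin m → ℤ) : ℝ :=
  if ∀ q, 0 ≤ k q then Matrix.trace ((List.ofFn fun q => Lmat (k q).toNat).prod) else 0

/-- The matrices `B_k`, with entries in `ℚ[N]`. -/
noncomputable def Bmat (k : ℕ) : Matrix (Fin 2) (Fin 2) (Polynomial ℚ) :=
  if k = 0 then !![1, 0; 0, 0]
  else if k % 2 = 0 then
    !![Polynomial.C ((df (k - 1) : ℚ) * (1 + (-1 : ℚ) ^ ((k - 2) / 2)) / (k : ℚ)) * Polynomial.X, 0;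
       0, -(Polynomial.C ((df (k - 1) : ℚ) * (1 + (-1 : ℚ) ^ ((k - 2) / 2)) / (k : ℚ)) * Polynomial.X)]
  else
    !![0, -(Polynomial.C ((df (k - 2) : ℚ)) * Polynomial.X);
       Polynomial.C ((df (k - 2) : ℚ) * (-1 : ℚ) ^ ((k - 1) / 2)), 0]

/-- `b_{k_1,…,k_m} = [N^1] tr(B_{k_1}⋯B_{k_m})` if all indices are nonnegative, else `0`. -/
noncomputable def bSeq (m : ℕ) (k : Fin m → ℤ) : ℚ :=
  if ∀ q, 0 ≤ k q then (Matrix.trace ((List.ofFn fun q => Bmat (k q).toNat).prod)).coeff 1 else 0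

/-- `J_{σ,q}(j)`: `-j-1` if `σ(q) < σ(q+1)`, and `j` if `σ(q) > σ(q+1)` (indices cyclic). -/
def Jfun {m : ℕ} [NeZero m] (σ : Equiv.Perm (Fin m)) (q : Fin m) (j : ℕ) : ℤ :=
  if σ q < σ (q + 1) then -(j : ℤ) - 1 else (j : ℤ)

/-- `K_{i,σ,q}(j) = i_{σ(q)} + J_{σ,q}(j_q) − J_{σ,q−1}(j_{q−1})`, indices cyclic. -/
def Kfun {m : ℕ} [NeZero m] (i : Fin m → ℤ) (σ : Equiv.Perm (Fin m)) (j : Fin m → ℕ)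
    (q : Fin m) : ℤ :=
  i (σ q) + Jfun σ q (j q) - Jfun σ (q - 1) (j (q - 1))

/-- `m(σ) = #{q : σ(q+1) < σ(q)}` (indices cyclic). -/
def mcount {m : ℕ} [NeZero m] (σ : Equiv.Perm (Fin m)) : ℕ :=
  (Finset.univ.filter fun q : Fin m => σ (q + 1) < σ q).card

/-- The normalized enumeration `𝒢^og` of ordinary graphs, via Lemma 2.2:
`𝒢^og(g) = (1/(m·(2g+2m−3)!!)) Σ_σ (−1)^{m(σ)+1} Σ_j l_{K_{i,σ,1}(j),…,K_{i,σ,m}(j)}`. -/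
noncomputable def Gog (m : ℕ) [NeZero m] (i : Fin m → ℤ) (g : ℤ) : ℝ :=
  (1 / ((m : ℝ) * (dfacZ (2 * g + 2 * m - 3) : ℝ))) *
    ∑ σ : Equiv.Perm (Fin m), (-1 : ℝ) ^ (mcount σ + 1) *
      ∑' j : Fin m → ℕ, lSeq m (Kfun i σ j)

/-- The normalized enumeration `𝒢^rg` of ribbon graphs with one face, via Lemma 3.1:
`𝒢^rg(g) = (1/(2m·(4g+2m−5)!!)) Σ_σ (−1)^{m(σ)+1} Σ_j b_{K_{i,σ,1}(j),…,K_{i,σ,m}(j)}`. -/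
noncomputable def Grg (m : ℕ) [NeZero m] (i : Fin m → ℤ) (g : ℤ) : ℝ :=
  (1 / (2 * (m : ℝ) * (dfacZ (4 * g + 2 * m - 5) : ℝ))) *
    ∑ σ : Equiv.Perm (Fin m), (-1 : ℝ) ^ (mcount σ + 1) *
      ∑' j : Fin m → ℕ, ((bSeq m (Kfun i σ j) : ℚ) : ℝ)

/-- `σ ∈ S_{n+2}^{(r,n+2−r)}`: unimodal permutations of `{0,…,n+1}` fixing the last point,
strictly decreasing on positions `0,…,n+1−r` down to the value `0`, then strictly increasing
on positions `n+1−r,…,n+1` up to the value `n+1`. -/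
def SPerm (n r : ℕ) (σ : Equiv.Perm (Fin (n + 2))) : Prop :=
  σ (Fin.last (n + 1)) = Fin.last (n + 1) ∧
  σ ⟨n + 1 - r, by omega⟩ = ⟨0, by omega⟩ ∧
  (∀ a b : Fin (n + 2), a < b → b.val ≤ n + 1 - r → σ b < σ a) ∧
  (∀ a b : Fin (n + 2), n + 1 - r ≤ a.val → a < b → σ a < σ b)

/-- `σ ∈ S_{n+2}^{{2}} = ∪_{r=1}^{n+1} S_{n+2}^{(r,n+2−r)}`. -/
def inS2 (n : ℕ) (σ : Equiv.Perm (Fin (n + 2))) : Prop :=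
  ∃ r, 1 ≤ r ∧ r ≤ n + 1 ∧ SPerm n r σ

lemma df_pos (k : ℕ) : 0 < df k := by
  induction k using Nat.strong_induction_on with
  | _ k ih =>
    match k with
    | 0 => simp [df]
    | 1 => simp [df]
    | k+2 =>
      rw [df]
      exact Nat.mul_pos (by omega) (ih k (by omega))

lemma df_lower (K t : ℕ) (ht : 1 ≤ t) : (K + 2) * df K ≤ df (K + 2 * t) := by
  induction t, ht using Nat.le_induction with
  | base => rw [show K + 2*1 = K + 2 by ring, df]
  | succ t ht ih =>
      have h : df (K + 2*(t+1)) = (K + 2*t + 2) * df (K + 2*t) := by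
        rw [show K + 2*(t+1) = (K + 2*t) + 2 by ring, df]
      rw [h]
      calc (K+2) * df K ≤ df (K+2*t) := ih
        _ ≤ (K+2*t+2) * df (K+2*t) := Nat.le_mul_of_pos_left _ (by omega)

lemma tendsto_df_ratio (t : ℕ) :
    Filter.Tendsto (fun K : ℕ => (df K : ℝ) / df (K + 2 * t)) Filter.atTop
      (nhds (if t = 0 then 1 else 0)) := by
  rcases Nat.eq_zero_or_pos t with h | h
  · subst h
    rw [if_pos rfl]
    have : (fun K : ℕ => (df K : ℝ) / df (K + 2 * 0)) = fun _ => 1 := by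
      funext K
      simp only [Nat.mul_zero, Nat.add_zero]
      rw [div_self]
      exact_mod_cast (df_pos K).ne'
    rw [this]
    exact tendsto_const_nhds
  · rw [if_neg (by omega)]
    apply squeeze_zero (g := fun K : ℕ => 1 / ((K : ℝ) + 2))
    · intro K; positivity
    · intro K
      rw [div_le_div_iff₀ (by exact_mod_cast df_pos _) (by positivity)]
      rw [one_mul]
      calc (df K : ℝ) * ((K:ℝ) + 2) = (((K + 2) * df K : ℕ) : ℝ) := by push_cast; ring
        _ ≤ df (K + 2*t) := by exact_mod_cast df_lower K t h
    · simp only [one_div]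
      apply Filter.Tendsto.inv_tendsto_atTop
      apply Filter.tendsto_atTop_add_const_right
      exact tendsto_natCast_atTop_atTop

def E2 : Matrix (Fin 2) (Fin 2) ℝ := !![1,0;0,0]

lemma E2_mul_E2 : E2 * E2 = E2 := by
  ext i j
  fin_cases i <;> fin_cases j <;> simp [E2, Matrix.mul_apply, Fin.sum_univ_two]

lemma E2_pow (n : ℕ) : E2 ^ (n+1) = E2 := by
  induction n with
  | zero => exact pow_one _
  | succ n ih => rw [pow_succ, ih, E2_mul_E2]

lemma E2_pow_00 (n : ℕ) : (E2 ^ n) 0 0 = 1 := by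
  cases n with
  | zero => simp [Matrix.one_apply]
  | succ n => rw [E2_pow]; simp [E2]

lemma E2_pow_10 (n : ℕ) : (E2 ^ n) 1 0 = 0 := by
  cases n with
  | zero => simp [Matrix.one_apply]
  | succ n => rw [E2_pow]; simp [E2]

lemma Lmat_zero : Lmat 0 = E2 := by simp [Lmat, E2]

lemma Lmat_one : Lmat 1 = !![0,-1;1,0] := by norm_num [Lmat, df]

lemma Lmat_even (K : ℕ) (h0 : K ≠ 0) (h2 : K % 2 = 0) :
    Lmat K = !![(df (K-1) : ℝ), 0; 0, -(df (K-1):ℝ)] := by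
  rw [Lmat, if_neg h0, if_pos h2]

lemma Lmat_odd (K : ℕ) (h : K % 2 = 1) :
    Lmat K = !![0, -(df K:ℝ); (df (K-2):ℝ), 0] := by
  rw [Lmat, if_neg (by omega), if_neg (by omega)]

lemma trace_mul_even (P : Matrix (Fin 2) (Fin 2) ℝ) (a : ℝ) :
    Matrix.trace (P * !![a,0;0,-a]) = a * (P 0 0 - P 1 1) := by
  simp [Matrix.trace_fin_two, Matrix.mul_apply, Fin.sum_univ_two]
  ring

lemma trace_mul_odd (P : Matrix (Fin 2) (Fin 2) ℝ) (b c : ℝ) :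
    Matrix.trace (P * !![0,-b;c,0]) = c * P 0 1 - b * P 1 0 := by
  simp [Matrix.trace_fin_two, Matrix.mul_apply, Fin.sum_univ_two]
  ring


lemma lSeq_eval (m : ℕ) (k : Fin (m+1) → ℕ) (K : ℤ) (hK : 0 ≤ K) :
    lSeq (m+2) (Fin.snoc (fun p => (k p : ℤ)) K) =
      Matrix.trace ((List.ofFn fun p : Fin (m+1) => Lmat (k p)).prod * Lmat K.toNat) := by
  rw [lSeq, if_pos]
  · congr 1
    rw [List.ofFn_succ', List.prod_concat]
    have h1 : (fun i : Fin (m+1) =>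
        Lmat ((Fin.snoc (fun p => (k p : ℤ)) K : Fin (m+2) → ℤ) i.castSucc).toNat)
        = fun p : Fin (m+1) => Lmat (k p) := by
      funext i; simp
    have h2 : ((Fin.snoc (fun p => (k p : ℤ)) K : Fin (m+2) → ℤ) (Fin.last (m+1))).toNat
        = K.toNat := by simp
    rw [show (List.ofFn fun i : Fin (m+1) =>
        Lmat ((Fin.snoc (fun p => (k p : ℤ)) K : Fin (m+2) → ℤ) i.castSucc).toNat)
        = List.ofFn fun p : Fin (m+1) => Lmat (k p) from congrArg _ h1, h2]
  · intro q
    refine Fin.lastCases ?_ ?_ q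
    · simpa using hK
    · intro p; simp

lemma sum_eq_k0 (m : ℕ) (k : Fin (m+1) → ℕ) (h : ∀ p, p ≠ 0 → k p = 0) :
    ∑ p, k p = k 0 := Fintype.sum_eq_single 0 h

lemma kp_bound (m : ℕ) (k : Fin (m+1) → ℕ) (p : Fin (m+1)) (hp : p ≠ 0) :
    k 0 + k p ≤ ∑ q, k q := by
  rw [← Finset.sum_pair (Ne.symm hp)]
  exact Finset.sum_le_sum_of_subset (Finset.subset_univ _)

lemma prod_all_zero (m : ℕ) (k : Fin m → ℕ) (h : ∀ p, k p = 0) :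
    (List.ofFn fun p : Fin m => Lmat (k p)).prod = E2 ^ m := by
  have : (fun p : Fin m => Lmat (k p)) = fun _ => E2 := by
    funext p; rw [h p, Lmat_zero]
  rw [this, List.ofFn_const, List.prod_replicate]

/-- Limit (2.23) in the paper (paper `n = m+2 ≥ 2`): for fixed nonnegative `k_1,…,k_{n−1}`,
`l_{k_1,…,k_{n−1},2g+2n−2−|k|}/(2g+2n−3)!!` converges as `g → ∞`, to `1` if all `k_p = 0`,
to `−1` if `(k_1,…,k_{n−1}) = (1,0,…,0)`, and to `0` otherwise. -/
theorem lSeq_normalized_limit (m : ℕ) (k : Fin (m + 1) → ℕ) :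
    Filter.Tendsto
      (fun g : ℤ =>
        lSeq (m + 2)
            (Fin.snoc (fun p => (k p : ℤ)) (2 * g + 2 * (m + 2 : ℕ) - 2 - ∑ p, (k p : ℤ))) /
          (dfacZ (2 * g + 2 * (m + 2 : ℕ) - 3) : ℝ))
      Filter.atTop
      (nhds (if ∀ p, k p = 0 then 1
        else if k 0 = 1 ∧ ∀ p, p ≠ 0 → k p = 0 then -1 else 0)) := by
  have hsum : (∑ p, (k p : ℤ)) = ((∑ p, k p : ℕ) : ℤ) := by push_cast; rfl
  set S : ℕ := ∑ p, k p with hSdef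
  set P : Matrix (Fin 2) (Fin 2) ℝ := (List.ofFn fun p : Fin (m+1) => Lmat (k p)).prod with hPdef
  rcases Nat.even_or_odd S with ⟨s, hs⟩ | ⟨s, hs⟩
  · -- even case : S = s + s
    have hv : Filter.Tendsto (fun g : ℤ => (2*g + 2*(m:ℤ) + 1 - 2*(s:ℤ)).toNat)
        Filter.atTop Filter.atTop := by
      rw [Filter.tendsto_atTop_atTop]
      intro b
      exact ⟨b + 2*s + 2*m + 5, fun g hg => by omega⟩
    have hlim := (((tendsto_df_ratio s).comp hv).const_mul (P 0 0 - P 1 1))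
    simp only [Function.comp_def] at hlim
    have hval : (if ∀ p, k p = 0 then (1:ℝ)
        else if k 0 = 1 ∧ ∀ p, p ≠ 0 → k p = 0 then -1 else 0)
        = (P 0 0 - P 1 1) * (if s = 0 then (1:ℝ) else 0) := by
      rcases Nat.eq_zero_or_pos s with h0 | h0
      · have hz : ∑ p, k p = 0 := by rw [← hSdef]; omega
        have hall : ∀ p, k p = 0 := fun p =>
          Finset.sum_eq_zero_iff.mp hz p (Finset.mem_univ p)
        rw [if_pos hall, if_pos h0]
        rw [hPdef, prod_all_zero (m+1) k hall, E2_pow]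
        norm_num [E2]
      · rw [if_neg h0.ne', mul_zero, if_neg, if_neg]
        · rintro ⟨h1, h2⟩
          have := sum_eq_k0 m k h2
          omega
        · intro hall
          have : S = 0 := Finset.sum_eq_zero (fun p _ => hall p)
          omega
    rw [hval]
    refine Filter.Tendsto.congr' ?_ hlim
    rw [Filter.eventuallyEq_iff_exists_mem]
    refine ⟨{g | (S:ℤ) + 2*m + 10 ≤ g}, Filter.mem_atTop _, fun g hg => ?_⟩
    simp only [Set.mem_setOf_eq] at hg
    beta_reduce
    rw [hsum]
    rw [lSeq_eval m k (2 * g + 2 * ((m + 2 : ℕ) : ℤ) - 2 - (S:ℤ)) (by omega)]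
    have hKt : ((2:ℤ)*g + 2*((m+2:ℕ):ℤ) - 2 - (S:ℤ)).toNat
        = (2*g + 2*(m:ℤ) + 1 - 2*(s:ℤ)).toNat + 1 := by omega
    rw [hKt, Lmat_even _ (by omega) (by omega), Nat.add_sub_cancel, trace_mul_even]
    simp only [dfacZ]
    rw [if_neg (by omega)]
    rw [show ((2:ℤ)*g + 2*((m+2:ℕ):ℤ) - 3).toNat
        = (2*g + 2*(m:ℤ) + 1 - 2*(s:ℤ)).toNat + 2*s by omega]
    push_cast
    ring
  · -- odd case : S = 2*s + 1
    have hw : Filter.Tendsto (fun g : ℤ => (2*g + 2*(m:ℤ) - 1 - 2*(s:ℤ)).toNat)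
        Filter.atTop Filter.atTop := by
      rw [Filter.tendsto_atTop_atTop]
      intro b
      exact ⟨b + 2*s + 2*m + 5, fun g hg => by omega⟩
    have hw2 : Filter.Tendsto (fun g : ℤ => (2*g + 2*(m:ℤ) - 1 - 2*(s:ℤ)).toNat + 2)
        Filter.atTop Filter.atTop := by
      rw [Filter.tendsto_atTop_atTop]
      intro b
      exact ⟨b + 2*s + 2*m + 5, fun g hg => by omega⟩
    have hlim1 := (((tendsto_df_ratio (s+1)).comp hw).const_mul (P 0 1))
    have hlim2 := (((tendsto_df_ratio s).comp hw2).const_mul (P 1 0))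
    have hlim := hlim1.sub hlim2
    simp only [Function.comp_def] at hlim
    rw [if_neg (Nat.succ_ne_zero s), mul_zero, zero_sub] at hlim
    have hPd : P = Lmat (k 0) * (List.ofFn fun i : Fin m => Lmat (k i.succ)).prod := by
      rw [hPdef, List.ofFn_succ, List.prod_cons]
    have hval : (if ∀ p, k p = 0 then (1:ℝ)
        else if k 0 = 1 ∧ ∀ p, p ≠ 0 → k p = 0 then -1 else 0)
        = -(P 1 0 * (if s = 0 then (1:ℝ) else 0)) := by
      have hne : ¬ ∀ p, k p = 0 := by
        intro hall
        have : S = 0 := Finset.sum_eq_zero (fun p _ => hall p)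
        omega
      rw [if_neg hne]
      rcases Nat.eq_zero_or_pos s with h0 | h0
      · have hb : ∀ p, p ≠ 0 → k p = 0 ∨ k 0 = 0 := by
          intro p hp
          have h := kp_bound m k p hp
          rw [← hSdef] at h
          omega
        have hk0le : k 0 ≤ 1 := by
          have h := Finset.single_le_sum (f := k)
            (fun _ _ => Nat.zero_le _) (Finset.mem_univ (0 : Fin (m+1)))
          rw [← hSdef] at h
          omega
        by_cases hk0 : k 0 = 1
        · have hrest : ∀ p, p ≠ 0 → k p = 0 := by
            intro p hp
            rcases hb p hp with h | h
            · exact h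
            · omega
          rw [if_pos ⟨hk0, hrest⟩, if_pos h0]
          have hP10 : P 1 0 = 1 := by
            rw [hPd, hk0, Lmat_one,
              prod_all_zero m (fun i => k i.succ)
                (fun i => hrest i.succ (Fin.succ_ne_zero i))]
            simp [Matrix.mul_apply, Fin.sum_univ_two, E2_pow_00, E2_pow_10]
          rw [hP10]
          norm_num
        · have hk00 : k 0 = 0 := by omega
          rw [if_neg (by rintro ⟨h1, _⟩; exact hk0 h1)]
          have hP10 : P 1 0 = 0 := by
            rw [hPd, hk00, Lmat_zero]
            simp [E2, Matrix.mul_apply, Fin.sum_univ_two]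
          rw [hP10]
          norm_num
      · rw [if_neg h0.ne', mul_zero, neg_zero, if_neg]
        rintro ⟨h1, h2⟩
        have := sum_eq_k0 m k h2
        omega
    rw [hval]
    refine Filter.Tendsto.congr' ?_ hlim
    rw [Filter.eventuallyEq_iff_exists_mem]
    refine ⟨{g | (S:ℤ) + 2*m + 10 ≤ g}, Filter.mem_atTop _, fun g hg => ?_⟩
    simp only [Set.mem_setOf_eq] at hg
    beta_reduce
    rw [hsum]
    rw [lSeq_eval m k (2 * g + 2 * ((m + 2 : ℕ) : ℤ) - 2 - (S:ℤ)) (by omega)]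
    have hKt : ((2:ℤ)*g + 2*((m+2:ℕ):ℤ) - 2 - (S:ℤ)).toNat
        = (2*g + 2*(m:ℤ) - 1 - 2*(s:ℤ)).toNat + 2 := by omega
    rw [hKt, Lmat_odd _ (by omega), Nat.add_sub_cancel, trace_mul_odd]
    simp only [dfacZ]
    rw [if_neg (by omega)]
    rw [show ((2:ℤ)*g + 2*((m+2:ℕ):ℤ) - 3).toNat
        = (2*g + 2*(m:ℤ) - 1 - 2*(s:ℤ)).toNat + 2 + 2*s by omega]
    rw [show (2*g + 2*(m:ℤ) - 1 - 2*(s:ℤ)).toNat + 2*(s+1)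
        = (2*g + 2*(m:ℤ) - 1 - 2*(s:ℤ)).toNat + 2 + 2*s by ring]
    push_cast
    ring
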